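/- Let G and H be groups, let n ≥ 1, and let α : G → H be a surjective group homomorphism. Then the subgroup K = {(k_1, …, k_{n-1}, 1) : k_i ∈ ker α} of G^n is a normal subgroup of G^n_H, its intersection with the diagonal subgroup Δ_n(G) is trivial, and K · Δ_n(G) = G^n_H; in other words, G^n_H is the internal semidirect product of K and Δ_n(G). -/
import Mathlib


open Pointwise

/-- The `n`-fold fibre product `G^n_H` of a homomorphism `α : G →* H`,
as a subgroup of `Gⁿ`. -/
def fiberProd {G H : Type*} [Group G] [Group H] (α : G →* H) (n : ℕ) :
    Subgroup (Fin n → G) where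
  carrier := {g | ∀ i j, α (g i) = α (g j)}
  one_mem' := fun _ _ => rfl
  mul_mem' := by
    intro a b ha hb i j
    simp only [Pi.mul_apply, map_mul, ha i j, hb i j]
  inv_mem' := by
    intro a ha i j
    simp only [Pi.inv_apply, map_inv, ha i j]

/-- The diagonal homomorphism `Δ_n : G →* Gⁿ`. -/
def diagHom (G : Type*) [Group G] (n : ℕ) : G →* (Fin n → G) where
  toFun g := fun _ => g
  map_one' := rfl
  map_mul' _ _ := rfl

/-- The subgroup `K = (ker α)^{n-1} × {1}` of `Gⁿ`: tuples with all coordinates in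
`ker α` and trivial last coordinate. -/
def Ksub {G H : Type*} [Group G] [Group H] (α : G →* H) (n : ℕ) (hn : 1 ≤ n) :
    Subgroup (Fin n → G) where
  carrier := {g | (∀ i, g i ∈ α.ker) ∧ g ⟨n - 1, by omega⟩ = 1}
  one_mem' := ⟨fun _ => α.ker.one_mem, rfl⟩
  mul_mem' := by
    intro a b ha hb
    exact ⟨fun i => α.ker.mul_mem (ha.1 i) (hb.1 i), by
      show a _ * b _ = 1
      rw [ha.2, hb.2, one_mul]⟩
  inv_mem' := by
    intro a ha
    exact ⟨fun i => α.ker.inv_mem (ha.1 i), by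
      show (a _)⁻¹ = 1
      rw [ha.2, inv_one]⟩

/-- For a surjective group homomorphism `α : G → H` and `n ≥ 1`,
the subgroup `K = (ker α)^{n-1} × {1}` of `Gⁿ` is normal in the fibre product `G^n_H`,
meets the diagonal subgroup `Δ_n(G)` trivially, and satisfies `K · Δ_n(G) = G^n_H`;
i.e. `G^n_H` is the internal semidirect product of `K` and `Δ_n(G)`. -/
theorem stmt_2 {G H : Type*} [Group G] [Group H] (n : ℕ) (hn : 1 ≤ n)
    (α : G →* H) (hα : Function.Surjective α) :
    (∀ g ∈ fiberProd α n, ∀ k ∈ Ksub α n hn, g * k * g⁻¹ ∈ Ksub α n hn) ∧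
    Ksub α n hn ⊓ (diagHom G n).range = ⊥ ∧
    (↑(Ksub α n hn) * ↑(diagHom G n).range : Set (Fin n → G)) = ↑(fiberProd α n) := by
  refine ⟨?_, ?_, ?_⟩
  · intro g _ k hk
    refine ⟨fun i => ?_, ?_⟩
    · show g i * k i * (g i)⁻¹ ∈ α.ker
      rw [MonoidHom.mem_ker]
      have := hk.1 i
      rw [MonoidHom.mem_ker] at this
      simp [this]
    · show g _ * k _ * (g _)⁻¹ = 1
      rw [hk.2, mul_one, mul_inv_cancel]
  · rw [eq_bot_iff]
    rintro x ⟨hx, c, rfl⟩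
    have h1 : c = 1 := hx.2
    subst h1
    simp only [Subgroup.mem_bot]
    rfl
  · ext g
    constructor
    · rintro ⟨k, hk, d, ⟨c, rfl⟩, rfl⟩ i j
      show α (k i * c) = α (k j * c)
      have hi := hk.1 i; have hj := hk.1 j
      rw [MonoidHom.mem_ker] at hi hj
      simp [hi, hj]
    · intro hg
      set c := g ⟨n - 1, by omega⟩ with hc
      refine ⟨g * (diagHom G n c)⁻¹, ⟨fun i => ?_, ?_⟩, diagHom G n c, ⟨c, rfl⟩, by group⟩
      · show g i * c⁻¹ ∈ α.ker
        rw [MonoidHom.mem_ker]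
        have := hg i ⟨n - 1, by omega⟩
        simp [this, ← hc]
      · show g _ * c⁻¹ = 1
        rw [← hc, mul_inv_cancel]
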